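/- The number of plane partitions with at most m rows, at most n columns, and largest part at most 2 equals (1/(m+n+1)) * C(m+n+1, m+1) * C(m+n+1, m). -/

import Mathlib

open Finset

namespace PP2

/-- number of elements of `S` with value `≥ k` -/
def cnt {N : ℕ} (k : ℕ) (S : Finset (Fin N)) : ℕ :=
  (S.filter fun x => k ≤ x.val).card

lemma cnt_zero {N : ℕ} (S : Finset (Fin N)) : cnt 0 S = S.card := by
  simp [cnt]

lemma cnt_of_ge {N k : ℕ} (S : Finset (Fin N)) (h : N ≤ k) : cnt k S = 0 := by
  simp only [cnt, Finset.card_eq_zero]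
  apply Finset.filter_false_of_mem
  intro x _
  have := x.isLt
  omega

lemma cnt_succ_le {N k : ℕ} (S : Finset (Fin N)) : cnt (k+1) S ≤ cnt k S := by
  apply Finset.card_le_card
  intro x hx
  simp only [Finset.mem_filter] at *
  exact ⟨hx.1, by omega⟩

lemma cnt_le_succ {N k : ℕ} (S : Finset (Fin N)) : cnt k S ≤ cnt (k+1) S + 1 := by
  classical
  have hsp : S.filter (fun x => k ≤ x.val) =
      S.filter (fun x => k+1 ≤ x.val) ∪ S.filter (fun x => x.val = k) := by
    ext x
    simp only [Finset.mem_filter, Finset.mem_union]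
    by_cases hx : x ∈ S <;> simp [hx] <;> omega
  have h1 : (S.filter (fun x => x.val = k)).card ≤ 1 := by
    apply Finset.card_le_one.mpr
    intro a ha b hb
    simp only [Finset.mem_filter] at ha hb
    exact Fin.ext (by omega)
  calc cnt k S ≤ (S.filter (fun x => k+1 ≤ x.val)).card
      + (S.filter (fun x => x.val = k)).card := by
        rw [cnt, hsp]; exact Finset.card_union_le _ _
    _ ≤ cnt (k+1) S + 1 := by rw [cnt]; omega

lemma cnt_mono_pred {N k : ℕ} {S T : Finset (Fin N)} (h : S ⊆ T) : cnt k S ≤ cnt k T :=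
  Finset.card_le_card (Finset.filter_subset_filter _ h)

lemma cnt_lt_imp_lt {N k : ℕ} {S : Finset (Fin N)} (h : 0 < cnt k S) : k < N := by
  rw [cnt, Finset.card_pos] at h
  obtain ⟨x, hx⟩ := h
  rw [Finset.mem_filter] at hx
  have := x.isLt
  omega


variable {N : ℕ}


/-- swap the parts `≥ k0` of the two sets -/
def swapAt (k0 : ℕ) (p : Finset (Fin N) × Finset (Fin N)) :
    Finset (Fin N) × Finset (Fin N) :=
  ((p.1.filter fun x => x.val < k0) ∪ (p.2.filter fun x => k0 ≤ x.val),
   (p.2.filter fun x => x.val < k0) ∪ (p.1.filter fun x => k0 ≤ x.val))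

lemma swapAt_swapAt (k0 : ℕ) (p : Finset (Fin N) × Finset (Fin N)) :
    swapAt k0 (swapAt k0 p) = p := by
  obtain ⟨A, B⟩ := p
  simp only [swapAt, Prod.mk.injEq]
  constructor <;>
  · ext x
    simp only [Finset.mem_union, Finset.mem_filter]
    by_cases hx : x.val < k0
    · have hx' : ¬ k0 ≤ x.val := by omega
      simp [hx, hx']
    · have hx' : k0 ≤ x.val := by omega
      simp [hx, hx']

lemma cnt_swapAt_fst (k0 k : ℕ) (p : Finset (Fin N) × Finset (Fin N)) (hk : k0 ≤ k) :
    cnt k (swapAt k0 p).1 = cnt k p.2 := by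
  obtain ⟨A, B⟩ := p
  simp only [swapAt, cnt]
  congr 1
  ext x
  simp only [Finset.mem_filter, Finset.mem_union]
  by_cases hx : x ∈ B <;> simp [hx] <;> omega

lemma cnt_swapAt_snd (k0 k : ℕ) (p : Finset (Fin N) × Finset (Fin N)) (hk : k0 ≤ k) :
    cnt k (swapAt k0 p).2 = cnt k p.1 := by
  obtain ⟨A, B⟩ := p
  simp only [swapAt, cnt]
  congr 1
  ext x
  simp only [Finset.mem_filter, Finset.mem_union]
  by_cases hx : x ∈ A <;> simp [hx] <;> omega

lemma card_filter_lt_add_cnt (k0 : ℕ) (A : Finset (Fin N)) :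
    (A.filter fun x => x.val < k0).card + cnt k0 A = A.card := by
  rw [cnt]
  have h := Finset.card_filter_add_card_filter_not
    (s := A) (p := fun x : Fin N => x.val < k0)
  have heq : (A.filter fun x => k0 ≤ x.val) = A.filter (fun x => ¬ x.val < k0) :=
    Finset.filter_congr (fun x _ => by simp)
  rw [heq]
  exact h

lemma card_swapAt_fst (k0 : ℕ) (p : Finset (Fin N) × Finset (Fin N)) :
    (swapAt k0 p).1.card + cnt k0 p.1 = p.1.card + cnt k0 p.2 := by
  obtain ⟨A, B⟩ := p
  simp only [swapAt]
  have hdisj : Disjoint (A.filter fun x => x.val < k0) (B.filter fun x => k0 ≤ x.val) := by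
    rw [Finset.disjoint_left]
    intro x hx hx'
    simp only [Finset.mem_filter] at hx hx'
    omega
  rw [Finset.card_union_of_disjoint hdisj]
  have h1 := card_filter_lt_add_cnt k0 A
  have h2 : (B.filter fun x => k0 ≤ x.val).card = cnt k0 B := rfl
  omega

lemma card_swapAt_snd (k0 : ℕ) (p : Finset (Fin N) × Finset (Fin N)) :
    (swapAt k0 p).2.card + cnt k0 p.2 = p.2.card + cnt k0 p.1 := by
  obtain ⟨A, B⟩ := p
  exact card_swapAt_fst k0 (B, A)


/-- the largest `k` where `B`'s suffix count exceeds `A`'s -/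
noncomputable def k0sel (A B : Finset (Fin N)) : ℕ :=
  if h : ((Finset.range N).filter fun k => cnt k A < cnt k B).Nonempty then
    (((Finset.range N).filter fun k => cnt k A < cnt k B)).max' h
  else 0

lemma k0sel_eq (A B : Finset (Fin N)) (c : ℕ) (hcN : c < N) (hc : cnt c A < cnt c B)
    (hmax : ∀ k, c < k → cnt k B ≤ cnt k A) : k0sel A B = c := by
  have hmem : c ∈ (Finset.range N).filter fun k => cnt k A < cnt k B := by
    simp only [Finset.mem_filter, Finset.mem_range]
    exact ⟨hcN, hc⟩
  have hne : ((Finset.range N).filter fun k => cnt k A < cnt k B).Nonempty := ⟨c, hmem⟩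
  rw [k0sel, dif_pos hne]
  apply le_antisymm
  · apply Finset.max'_le
    intro y hy
    simp only [Finset.mem_filter, Finset.mem_range] at hy
    by_contra hyc
    exact absurd (hmax y (by omega)) (by omega)
  · exact Finset.le_max' _ c hmem

lemma cross_spec (A B : Finset (Fin N)) (h : ∃ k, cnt k A < cnt k B) :
    k0sel A B < N ∧ cnt (k0sel A B) B = cnt (k0sel A B) A + 1 ∧
      ∀ k, k0sel A B < k → cnt k B ≤ cnt k A := by
  obtain ⟨k, hk⟩ := h
  have hkN : k < N := cnt_lt_imp_lt (S := B) (k := k) (by omega)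
  have hmem : k ∈ (Finset.range N).filter fun k => cnt k A < cnt k B := by
    simp only [Finset.mem_filter, Finset.mem_range]; exact ⟨hkN, hk⟩
  have hne : ((Finset.range N).filter fun k => cnt k A < cnt k B).Nonempty := ⟨k, hmem⟩
  set c := k0sel A B with hc
  have hcval : c = (((Finset.range N).filter fun k => cnt k A < cnt k B)).max' hne := by
    rw [hc, k0sel, dif_pos hne]
  have hcmem : c ∈ (Finset.range N).filter fun k => cnt k A < cnt k B := by
    rw [hcval]; exact Finset.max'_mem _ _
  simp only [Finset.mem_filter, Finset.mem_range] at hcmem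
  have hafter : ∀ k', c < k' → cnt k' B ≤ cnt k' A := by
    intro k' hk'
    by_cases hk'N : k' < N
    · by_contra hcon
      have : k' ∈ (Finset.range N).filter fun k => cnt k A < cnt k B := by
        simp only [Finset.mem_filter, Finset.mem_range]; exact ⟨hk'N, by omega⟩
      have := Finset.le_max' _ k' this
      rw [← hcval] at this
      omega
    · rw [cnt_of_ge A (by omega), cnt_of_ge B (by omega)]
  refine ⟨hcmem.1, ?_, hafter⟩
  have h1 := cnt_le_succ (k := c) B
  have h2 := cnt_succ_le (k := c) B
  have h3 := cnt_succ_le (k := c) A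
  have h4 := hafter (c+1) (by omega)
  omega

/-- the reflection bijection: bad pairs of `m`-sets correspond to arbitrary
pairs of an `(m+1)`-set and an `(m-1)`-set. -/
lemma bad_card (m : ℕ) (hm : 1 ≤ m) :
    ((Finset.univ : Finset (Finset (Fin N) × Finset (Fin N))).filter fun p =>
        (p.1.card = m ∧ p.2.card = m) ∧ ¬ ∀ k < N, cnt k p.2 ≤ cnt k p.1).card =
    ((Finset.univ : Finset (Finset (Fin N) × Finset (Fin N))).filter fun p =>
        p.1.card = m + 1 ∧ p.2.card = m - 1).card := by
  refine Finset.card_bij' (fun p _ => swapAt (k0sel p.1 p.2) p)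
    (fun q _ => swapAt (k0sel q.2 q.1) q) ?hi ?hj ?left ?right
  case hi =>
    intro p hp
    simp only [Finset.mem_filter, Finset.mem_univ, true_and] at hp ⊢
    obtain ⟨⟨h1, h2⟩, hbad⟩ := hp
    push_neg at hbad
    obtain ⟨k, hkN, hk⟩ := hbad
    have hex : ∃ k, cnt k p.1 < cnt k p.2 := ⟨k, by omega⟩
    obtain ⟨hcN, hcnt, hafter⟩ := cross_spec p.1 p.2 hex
    have e1 := card_swapAt_fst (k0sel p.1 p.2) p
    have e2 := card_swapAt_snd (k0sel p.1 p.2) p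
    omega
  case hj =>
    intro q hq
    simp only [Finset.mem_filter, Finset.mem_univ, true_and] at hq ⊢
    obtain ⟨h1, h2⟩ := hq
    have hex : ∃ k, cnt k q.2 < cnt k q.1 := by
      refine ⟨0, ?_⟩
      rw [cnt_zero, cnt_zero]
      omega
    obtain ⟨hcN, hcnt, hafter⟩ := cross_spec q.2 q.1 hex
    have e1 := card_swapAt_fst (k0sel q.2 q.1) q
    have e2 := card_swapAt_snd (k0sel q.2 q.1) q
    refine ⟨⟨by omega, by omega⟩, ?_⟩
    push_neg
    refine ⟨k0sel q.2 q.1, hcN, ?_⟩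
    rw [cnt_swapAt_fst _ _ _ (le_refl _), cnt_swapAt_snd _ _ _ (le_refl _)]
    omega
  case left =>
    intro p hp
    simp only [Finset.mem_filter, Finset.mem_univ, true_and] at hp
    obtain ⟨⟨h1, h2⟩, hbad⟩ := hp
    push_neg at hbad
    obtain ⟨k, hkN, hk⟩ := hbad
    have hex : ∃ k, cnt k p.1 < cnt k p.2 := ⟨k, by omega⟩
    obtain ⟨hcN, hcnt, hafter⟩ := cross_spec p.1 p.2 hex
    set c := k0sel p.1 p.2 with hc
    have hsel : k0sel (swapAt c p).2 (swapAt c p).1 = c := by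
      apply k0sel_eq _ _ c hcN
      · rw [cnt_swapAt_fst _ _ _ (le_refl _), cnt_swapAt_snd _ _ _ (le_refl _)]
        omega
      · intro k hk'
        rw [cnt_swapAt_fst _ _ _ (by omega), cnt_swapAt_snd _ _ _ (by omega)]
        exact hafter k hk'
    show swapAt (k0sel (swapAt c p).2 (swapAt c p).1) (swapAt c p) = p
    rw [hsel, swapAt_swapAt]
  case right =>
    intro q hq
    simp only [Finset.mem_filter, Finset.mem_univ, true_and] at hq
    obtain ⟨h1, h2⟩ := hq
    have hex : ∃ k, cnt k q.2 < cnt k q.1 := by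
      refine ⟨0, ?_⟩
      rw [cnt_zero, cnt_zero]
      omega
    obtain ⟨hcN, hcnt, hafter⟩ := cross_spec q.2 q.1 hex
    set c := k0sel q.2 q.1 with hc
    have hsel : k0sel (swapAt c q).1 (swapAt c q).2 = c := by
      apply k0sel_eq _ _ c hcN
      · rw [cnt_swapAt_fst _ _ _ (le_refl _), cnt_swapAt_snd _ _ _ (le_refl _)]
        omega
      · intro k hk'
        rw [cnt_swapAt_fst _ _ _ (by omega), cnt_swapAt_snd _ _ _ (by omega)]
        exact hafter k hk'
    show swapAt (k0sel (swapAt c q).1 (swapAt c q).2) (swapAt c q) = q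
    rw [hsel, swapAt_swapAt]

lemma sized_card (a : ℕ) :
    ((Finset.univ : Finset (Finset (Fin N))).filter fun S => S.card = a).card = N.choose a := by
  have h := Fintype.card_finset_len (α := Fin N) a
  rw [Fintype.card_subtype] at h
  simpa using h

lemma pairs_card (a b : ℕ) :
    ((Finset.univ : Finset (Finset (Fin N) × Finset (Fin N))).filter fun p =>
      p.1.card = a ∧ p.2.card = b).card = N.choose a * N.choose b := by
  have h : ((Finset.univ : Finset (Finset (Fin N) × Finset (Fin N))).filter fun p =>
      p.1.card = a ∧ p.2.card = b)
      = ((Finset.univ : Finset (Finset (Fin N))).filter fun S => S.card = a) ×ˢ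
        ((Finset.univ : Finset (Finset (Fin N))).filter fun S => S.card = b) := by
    ext p
    simp [Finset.mem_product]
  rw [h, Finset.card_product, sized_card, sized_card]

lemma good_card_add (m : ℕ) (hm : 1 ≤ m) :
    ((Finset.univ : Finset (Finset (Fin N) × Finset (Fin N))).filter fun p =>
        (p.1.card = m ∧ p.2.card = m) ∧ ∀ k < N, cnt k p.2 ≤ cnt k p.1).card
      + N.choose (m+1) * N.choose (m-1) = N.choose m * N.choose m := by
  classical
  rw [← pairs_card (m+1) (m-1), ← bad_card m hm, ← pairs_card m m]
  have h1 : ((Finset.univ : Finset (Finset (Fin N) × Finset (Fin N))).filter fun p =>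
        (p.1.card = m ∧ p.2.card = m) ∧ ∀ k < N, cnt k p.2 ≤ cnt k p.1)
      = ((Finset.univ : Finset (Finset (Fin N) × Finset (Fin N))).filter fun p =>
        p.1.card = m ∧ p.2.card = m).filter fun p => ∀ k < N, cnt k p.2 ≤ cnt k p.1 := by
    rw [Finset.filter_filter]
  have h2 : ((Finset.univ : Finset (Finset (Fin N) × Finset (Fin N))).filter fun p =>
        (p.1.card = m ∧ p.2.card = m) ∧ ¬ ∀ k < N, cnt k p.2 ≤ cnt k p.1)
      = ((Finset.univ : Finset (Finset (Fin N) × Finset (Fin N))).filter fun p =>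
        p.1.card = m ∧ p.2.card = m).filter fun p => ¬ ∀ k < N, cnt k p.2 ≤ cnt k p.1 := by
    rw [Finset.filter_filter]
  rw [h1, h2]
  exact Finset.card_filter_add_card_filter_not _

section E1

lemma dc_mem_iff {ν : ℕ} {U : Finset (Fin ν)}
    (h : ∀ a b : Fin ν, a ≤ b → b ∈ U → a ∈ U) (j : Fin ν) :
    j ∈ U ↔ (j : ℕ) < U.card := by
  constructor
  · intro hj
    have hsub : Finset.Iic j ⊆ U := fun a ha => h a j (Finset.mem_Iic.mp ha) hj
    have := Finset.card_le_card hsub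
    rw [Fin.card_Iic] at this
    omega
  · intro hj
    by_contra hju
    have hsub : U ⊆ Finset.Iio j := by
      intro x hx
      rw [Finset.mem_Iio]
      by_contra hxj
      exact hju (h j x (not_lt.mp hxj) hx)
    have := Finset.card_le_card hsub
    rw [Fin.card_Iio] at this
    omega

lemma card_filter_lt {ν c : ℕ} (hc : c ≤ ν) :
    ((Finset.univ : Finset (Fin ν)).filter fun j => j.val < c).card = c := by
  set U := (Finset.univ : Finset (Fin ν)).filter fun j => j.val < c with hU
  have hdc : ∀ a b : Fin ν, a ≤ b → b ∈ U → a ∈ U := by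
    intro a b hab hb
    simp only [hU, Finset.mem_filter, Finset.mem_univ, true_and] at hb ⊢
    have : (a:ℕ) ≤ (b:ℕ) := hab
    omega
  have hcard : U.card ≤ ν := by
    have := Finset.card_le_univ U
    simpa using this
  rcases lt_trichotomy U.card c with h | h | h
  · exfalso
    have hj : (⟨U.card, by omega⟩ : Fin ν) ∈ U := by
      simp only [hU, Finset.mem_filter, Finset.mem_univ, true_and]
      exact h
    rw [dc_mem_iff hdc] at hj
    simp at hj
  · exact h
  · exfalso
    have hj : (⟨c, by omega⟩ : Fin ν) ∈ U := (dc_mem_iff hdc _).mpr (by simpa using h)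
    simp only [hU, Finset.mem_filter, Finset.mem_univ, true_and] at hj
    omega

variable {m n : ℕ}

def rowCount (π : Fin m → Fin n → ℕ) (c : ℕ) (i : Fin m) : ℕ :=
  ((Finset.univ : Finset (Fin n)).filter fun j => c ≤ π i j).card

lemma rowCount_iff (π : Fin m → Fin n → ℕ)
    (hmono : ∀ i i' j j', i ≤ i' → j ≤ j' → π i' j' ≤ π i j) (c : ℕ) (i : Fin m) (j : Fin n) :
    c ≤ π i j ↔ (j : ℕ) < rowCount π c i := by
  have h := dc_mem_iff (U := (Finset.univ : Finset (Fin n)).filter fun j => c ≤ π i j)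
    (fun a b hab hb => by
      simp only [Finset.mem_filter, Finset.mem_univ, true_and] at hb ⊢
      exact le_trans hb (hmono i i a b (le_refl i) hab)) j
  simp only [Finset.mem_filter, Finset.mem_univ, true_and] at h
  exact h.trans (by rfl)

def e1 : {π : Fin m → Fin n → ℕ //
        (∀ i j, π i j ≤ 2) ∧
        (∀ i i' j j', i ≤ i' → j ≤ j' → π i' j' ≤ π i j)} ≃
    {lm : (Fin m → ℕ) × (Fin m → ℕ) //
        (∀ i i' : Fin m, i ≤ i' → lm.1 i' ≤ lm.1 i) ∧
        (∀ i i' : Fin m, i ≤ i' → lm.2 i' ≤ lm.2 i) ∧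
        (∀ i, lm.2 i ≤ lm.1 i) ∧ (∀ i, lm.1 i ≤ n)} where
  toFun := fun p =>
    ⟨(fun i => rowCount p.val 1 i, fun i => rowCount p.val 2 i), by
      obtain ⟨hb, hmono⟩ := p.prop
      refine ⟨?_, ?_, ?_, ?_⟩
      · intro i i' hii
        dsimp only [rowCount]
        apply Finset.card_le_card
        intro j hj
        simp only [Finset.mem_filter, Finset.mem_univ, true_and] at hj ⊢
        exact le_trans hj (hmono i i' j j hii (le_refl j))
      · intro i i' hii
        dsimp only [rowCount]
        apply Finset.card_le_card
        intro j hj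
        simp only [Finset.mem_filter, Finset.mem_univ, true_and] at hj ⊢
        exact le_trans hj (hmono i i' j j hii (le_refl j))
      · intro i
        dsimp only [rowCount]
        apply Finset.card_le_card
        intro j hj
        simp only [Finset.mem_filter, Finset.mem_univ, true_and] at hj ⊢
        omega
      · intro i
        have := Finset.card_le_univ
          ((Finset.univ : Finset (Fin n)).filter fun j => 1 ≤ p.val i j)
        simpa [rowCount] using this⟩
  invFun := fun q =>
    ⟨fun i j => (if j.val < q.val.1 i then 1 else 0) + (if j.val < q.val.2 i then 1 else 0), by
      obtain ⟨hl, hu, hul, hln⟩ := q.prop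
      constructor
      · intro i j
        beta_reduce
        split_ifs <;> omega
      · intro i i' j j' hii hjj
        have h1 : q.val.1 i' ≤ q.val.1 i := hl i i' hii
        have h2 : q.val.2 i' ≤ q.val.2 i := hu i i' hii
        have h3 : (j:ℕ) ≤ (j':ℕ) := hjj
        beta_reduce
        split_ifs <;> omega⟩
  left_inv := by
    intro p
    apply Subtype.ext
    funext i j
    obtain ⟨hb, hmono⟩ := p.prop
    have h1 := rowCount_iff p.val hmono 1 i j
    have h2 := rowCount_iff p.val hmono 2 i j
    have hb' := hb i j
    show (if j.val < rowCount p.val 1 i then 1 else 0)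
        + (if j.val < rowCount p.val 2 i then 1 else 0) = p.val i j
    split_ifs <;> omega
  right_inv := by
    intro q
    obtain ⟨hl, hu, hul, hln⟩ := q.prop
    apply Subtype.ext
    have e1 : ∀ i, rowCount
        (fun (i : Fin m) (j : Fin n) =>
          (if j.val < q.val.1 i then 1 else 0) + (if j.val < q.val.2 i then 1 else 0))
        1 i = q.val.1 i := by
      intro i
      rw [rowCount]
      have : ((Finset.univ : Finset (Fin n)).filter fun j =>
          1 ≤ (if j.val < q.val.1 i then 1 else 0) + (if j.val < q.val.2 i then 1 else 0))
          = (Finset.univ : Finset (Fin n)).filter fun j => j.val < q.val.1 i := by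
        apply Finset.filter_congr
        intro j _
        have := hul i
        constructor
        · intro hj
          by_cases hc : j.val < q.val.1 i
          · exact hc
          · exfalso
            rw [if_neg hc, if_neg (by omega : ¬ (j.val < q.val.2 i))] at hj
            omega
        · intro hj
          rw [if_pos hj]
          omega
      rw [this]
      exact card_filter_lt (hln i)
    have e2 : ∀ i, rowCount
        (fun (i : Fin m) (j : Fin n) =>
          (if j.val < q.val.1 i then 1 else 0) + (if j.val < q.val.2 i then 1 else 0))
        2 i = q.val.2 i := by
      intro i
      rw [rowCount]
      have : ((Finset.univ : Finset (Fin n)).filter fun j =>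
          2 ≤ (if j.val < q.val.1 i then 1 else 0) + (if j.val < q.val.2 i then 1 else 0))
          = (Finset.univ : Finset (Fin n)).filter fun j => j.val < q.val.2 i := by
        apply Finset.filter_congr
        intro j _
        have := hul i
        constructor
        · intro hj
          by_contra hc
          rw [if_neg hc] at hj
          have hbd : (if j.val < q.val.1 i then 1 else 0) ≤ 1 := by split_ifs <;> omega
          omega
        · intro hj
          rw [if_pos hj, if_pos (by omega : j.val < q.val.1 i)]
      rw [this]
      exact card_filter_lt (le_trans (hul i) (hln i))
    apply Prod.ext
    · funext i
      exact e1 i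
    · funext i
      exact e2 i

end E1

section E2

variable {m n : ℕ}

lemma cnt_image {μ ν : ℕ} {f : Fin μ → Fin ν} (hf : Function.Injective f) (k : ℕ) :
    cnt k (Finset.univ.image f) = (Finset.univ.filter fun i => k ≤ (f i).val).card := by
  rw [cnt]
  have h : (Finset.univ.image f).filter (fun x => k ≤ x.val)
      = (Finset.univ.filter fun i => k ≤ (f i).val).image f := by
    ext x
    simp only [Finset.mem_filter, Finset.mem_image, Finset.mem_univ, true_and]
    constructor
    · rintro ⟨⟨i, rfl⟩, hk⟩
      exact ⟨i, hk, rfl⟩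
    · rintro ⟨i, hk, rfl⟩
      exact ⟨⟨i, rfl⟩, hk⟩
  rw [h, Finset.card_image_of_injective _ hf]

lemma strictMono_gap {μ ν : ℕ} (f : Fin μ → Fin ν) (hf : StrictMono f) :
    ∀ (d : ℕ) (a b : Fin μ), a.val + d = b.val → (f a).val + d ≤ (f b).val := by
  intro d
  induction d with
  | zero =>
    intro a b h
    have hab : a = b := Fin.ext (by omega)
    rw [hab]
    omega
  | succ d ih =>
    intro a b h
    have hb : a.val + d < μ := by have := b.isLt; omega
    have h1 := ih a ⟨a.val + d, hb⟩ rfl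
    have h2 : f ⟨a.val + d, hb⟩ < f b := hf (by rw [Fin.lt_def]; simp; omega)
    rw [Fin.lt_def] at h2
    omega

lemma image_orderEmbOfFin {ν : ℕ} {S : Finset (Fin ν)} (hS : S.card = m) :
    Finset.univ.image (fun r => S.orderEmbOfFin hS r) = S := by
  apply Finset.eq_of_subset_of_card_le
  · intro x hx
    simp only [Finset.mem_image, Finset.mem_univ, true_and] at hx
    obtain ⟨r, rfl⟩ := hx
    exact Finset.orderEmbOfFin_mem S hS r
  · rw [Finset.card_image_of_injective _ (S.orderEmbOfFin hS).injective,
      Finset.card_univ, Fintype.card_fin, hS]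

lemma cnt_orderEmbOfFin {ν : ℕ} {S : Finset (Fin ν)} (hS : S.card = m) (k : ℕ) :
    cnt k S = (Finset.univ.filter fun r : Fin m => k ≤ (S.orderEmbOfFin hS r).val).card := by
  conv_lhs => rw [← image_orderEmbOfFin hS]
  exact cnt_image (S.orderEmbOfFin hS).injective k

lemma le_orderEmbOfFin {ν : ℕ} {S : Finset (Fin ν)} (hS : S.card = m) (r : Fin m) :
    r.val ≤ (S.orderEmbOfFin hS r).val := by
  have h0 : (0 : ℕ) < m := r.pos
  have := strictMono_gap _ (S.orderEmbOfFin hS).strictMono r.val ⟨0, h0⟩ r (by simp)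
  omega

lemma orderEmbOfFin_le {ν : ℕ} {S : Finset (Fin ν)} (hS : S.card = m) (r : Fin m) :
    (S.orderEmbOfFin hS r).val + (m - 1 - r.val) ≤ ν - 1 := by
  have h0 : (0 : ℕ) < m := r.pos
  have hlast : m - 1 < m := by omega
  have := strictMono_gap _ (S.orderEmbOfFin hS).strictMono (m - 1 - r.val) r ⟨m - 1, hlast⟩
    (by simp; omega)
  have := (S.orderEmbOfFin hS ⟨m - 1, hlast⟩).isLt
  omega

/-- the strictly decreasing encoding of an antitone sequence -/
def Xf (l : Fin m → ℕ) (hl : ∀ i, l i ≤ n) (i : Fin m) : Fin (m + n) :=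
  ⟨l i + (i.rev : ℕ), by
    have h1 := i.isLt
    have h2 := hl i
    have h3 : (i.rev : ℕ) = m - (i.val + 1) := Fin.val_rev i
    omega⟩

lemma Xf_val (l : Fin m → ℕ) (hl : ∀ i, l i ≤ n) (i : Fin m) :
    (Xf l hl i).val = l i + (m - (i.val + 1)) := by
  show l i + (i.rev : ℕ) = _
  rw [Fin.val_rev]

lemma Xf_strictAnti (l : Fin m → ℕ) (hl : ∀ i, l i ≤ n)
    (hanti : ∀ i i' : Fin m, i ≤ i' → l i' ≤ l i) {i i' : Fin m} (h : i < i') :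
    (Xf l hl i').val < (Xf l hl i).val := by
  rw [Xf_val, Xf_val]
  have h1 := hanti i i' (le_of_lt h)
  have h2 : i.val < i'.val := h
  have h3 := i'.isLt
  omega

lemma Xf_inj (l : Fin m → ℕ) (hl : ∀ i, l i ≤ n)
    (hanti : ∀ i i' : Fin m, i ≤ i' → l i' ≤ l i) : Function.Injective (Xf l hl) := by
  intro i i' hii
  by_contra hne
  rcases lt_or_gt_of_ne hne with h | h
  · have := Xf_strictAnti l hl hanti h
    rw [hii] at this
    omega
  · have := Xf_strictAnti l hl hanti h
    rw [hii] at this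
    omega

lemma card_toS (l : Fin m → ℕ) (hl : ∀ i, l i ≤ n)
    (hanti : ∀ i i' : Fin m, i ≤ i' → l i' ≤ l i) :
    (Finset.univ.image (Xf l hl)).card = m := by
  rw [Finset.card_image_of_injective _ (Xf_inj l hl hanti), Finset.card_univ, Fintype.card_fin]

/-- antitone sequence recovered from a set -/
def lamOf {S : Finset (Fin (m + n))} (hS : S.card = m) (i : Fin m) : ℕ :=
  (S.orderEmbOfFin hS i.rev).val - (i.rev : ℕ)

lemma lamOf_le (S : Finset (Fin (m + n))) (hS : S.card = m) (i : Fin m) : lamOf hS i ≤ n := by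
  have h := orderEmbOfFin_le hS i.rev
  have h2 : (i.rev : ℕ) = m - (i.val + 1) := Fin.val_rev i
  have h3 := i.isLt
  rw [lamOf]
  omega

lemma lamOf_anti (S : Finset (Fin (m + n))) (hS : S.card = m) (i i' : Fin m) (h : i ≤ i') :
    lamOf hS i' ≤ lamOf hS i := by
  rw [lamOf, lamOf]
  have hrev : i'.rev ≤ i.rev := by
    rw [Fin.le_def, Fin.val_rev, Fin.val_rev]
    have : i.val ≤ i'.val := h
    have := i'.isLt
    omega
  have hgap := strictMono_gap _ (S.orderEmbOfFin hS).strictMono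
    ((i.rev : ℕ) - (i'.rev : ℕ)) i'.rev i.rev (by omega)
  have hle := le_orderEmbOfFin hS i'.rev
  omega

lemma Xf_lamOf (S : Finset (Fin (m + n))) (hS : S.card = m) (i : Fin m) :
    Xf (lamOf hS) (lamOf_le S hS) i = S.orderEmbOfFin hS i.rev := by
  apply Fin.ext
  show lamOf hS i + (i.rev : ℕ) = _
  rw [lamOf]
  have := le_orderEmbOfFin hS i.rev
  omega

lemma toS_lamOf (S : Finset (Fin (m + n))) (hS : S.card = m) :
    Finset.univ.image (Xf (lamOf hS) (lamOf_le S hS)) = S := by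
  have h : Finset.univ.image (Xf (lamOf hS) (lamOf_le S hS))
      = Finset.univ.image (fun i : Fin m => S.orderEmbOfFin hS i.rev) := by
    apply Finset.image_congr
    intro i _
    exact Xf_lamOf S hS i
  rw [h]
  ext x
  simp only [Finset.mem_image, Finset.mem_univ, true_and]
  constructor
  · rintro ⟨i, rfl⟩
    exact Finset.orderEmbOfFin_mem S hS i.rev
  · intro hx
    have hx' : x ∈ Finset.univ.image (fun r => S.orderEmbOfFin hS r) := by
      rw [image_orderEmbOfFin hS]
      exact hx
    simp only [Finset.mem_image, Finset.mem_univ, true_and] at hx'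
    obtain ⟨r, rfl⟩ := hx'
    exact ⟨r.rev, by rw [Fin.rev_rev]⟩

lemma dom_point {S T : Finset (Fin (m + n))} (hS : S.card = m) (hT : T.card = m)
    (hdom : ∀ k < m + n, cnt k T ≤ cnt k S) (r : Fin m) :
    (T.orderEmbOfFin hT r).val ≤ (S.orderEmbOfFin hS r).val := by
  by_contra hcon
  push_neg at hcon
  set k := (T.orderEmbOfFin hT r).val with hk
  have hkN : k < m + n := (T.orderEmbOfFin hT r).isLt
  have h1 : m - r.val ≤ cnt k T := by
    rw [cnt_orderEmbOfFin hT k]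
    have hsub : Finset.Ici r ⊆ Finset.univ.filter fun j : Fin m => k ≤ (T.orderEmbOfFin hT j).val := by
      intro j hj
      rw [Finset.mem_Ici] at hj
      simp only [Finset.mem_filter, Finset.mem_univ, true_and]
      exact (T.orderEmbOfFin hT).monotone hj
    have := Finset.card_le_card hsub
    rw [Fin.card_Ici] at this
    omega
  have h2 : cnt k S ≤ m - 1 - r.val := by
    rw [cnt_orderEmbOfFin hS k]
    have hsub : (Finset.univ.filter fun j : Fin m => k ≤ (S.orderEmbOfFin hS j).val)
        ⊆ Finset.Ioi r := by
      intro j hj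
      simp only [Finset.mem_filter, Finset.mem_univ, true_and] at hj
      rw [Finset.mem_Ioi]
      by_contra hjr
      push_neg at hjr
      have := (S.orderEmbOfFin hS).monotone hjr
      rw [Fin.le_def] at this
      omega
    have := Finset.card_le_card hsub
    rw [Fin.card_Ioi] at this
    omega
  have h3 := hdom k hkN
  have h4 := r.isLt
  omega

lemma lamOf_toS (l : Fin m → ℕ) (hl : ∀ i, l i ≤ n)
    (hanti : ∀ i i' : Fin m, i ≤ i' → l i' ≤ l i)
    (hcard : (Finset.univ.image (Xf l hl)).card = m) (i : Fin m) :
    lamOf hcard i = l i := by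
  have hemb : ∀ r : Fin m, ((Finset.univ.image (Xf l hl)).orderEmbOfFin hcard) r
      = Xf l hl r.rev := by
    have h := Finset.orderEmbOfFin_unique hcard (f := fun r : Fin m => Xf l hl r.rev)
      (fun r => Finset.mem_image_of_mem _ (Finset.mem_univ _))
      (by
        intro r r' hrr
        have hrev : r'.rev < r.rev := by
          rw [Fin.lt_def, Fin.val_rev, Fin.val_rev]
          have h1 : r.val < r'.val := hrr
          have := r'.isLt
          omega
        have := Xf_strictAnti l hl hanti hrev
        rw [Fin.lt_def]
        exact this)
    intro r
    exact (congrFun h r).symm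
  rw [lamOf, hemb i.rev, Fin.rev_rev, Xf_val]
  have h2 : (i.rev : ℕ) = m - (i.val + 1) := Fin.val_rev i
  omega

def e2 : {lm : (Fin m → ℕ) × (Fin m → ℕ) //
        (∀ i i' : Fin m, i ≤ i' → lm.1 i' ≤ lm.1 i) ∧
        (∀ i i' : Fin m, i ≤ i' → lm.2 i' ≤ lm.2 i) ∧
        (∀ i, lm.2 i ≤ lm.1 i) ∧ (∀ i, lm.1 i ≤ n)} ≃
    {p : Finset (Fin (m + n)) × Finset (Fin (m + n)) //
        (p.1.card = m ∧ p.2.card = m) ∧ ∀ k < m + n, cnt k p.2 ≤ cnt k p.1} where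
  toFun := fun q =>
    ⟨(Finset.univ.image (Xf q.val.1 (fun i => q.prop.2.2.2 i)),
      Finset.univ.image (Xf q.val.2 (fun i => le_trans (q.prop.2.2.1 i) (q.prop.2.2.2 i)))), by
      obtain ⟨hl, hu, hul, hln⟩ := q.prop
      refine ⟨⟨card_toS _ _ hl, card_toS _ _ hu⟩, ?_⟩
      intro k _
      rw [cnt_image (Xf_inj _ _ hl) k, cnt_image (Xf_inj _ _ hu) k]
      apply Finset.card_le_card
      intro i hi
      simp only [Finset.mem_filter, Finset.mem_univ, true_and, Xf_val] at hi ⊢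
      have := hul i
      omega⟩
  invFun := fun p =>
    ⟨(lamOf p.prop.1.1, lamOf p.prop.1.2), by
      refine ⟨fun i i' h => lamOf_anti _ _ i i' h, fun i i' h => lamOf_anti _ _ i i' h,
        ?_, fun i => lamOf_le _ _ i⟩
      intro i
      have h := dom_point p.prop.1.1 p.prop.1.2 p.prop.2 i.rev
      show (p.val.2.orderEmbOfFin p.prop.1.2 i.rev).val - (i.rev : ℕ)
        ≤ (p.val.1.orderEmbOfFin p.prop.1.1 i.rev).val - (i.rev : ℕ)
      omega⟩
  left_inv := by
    intro q
    obtain ⟨hl, hu, hul, hln⟩ := q.prop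
    apply Subtype.ext
    apply Prod.ext
    · funext i
      exact lamOf_toS q.val.1 _ hl _ i
    · funext i
      exact lamOf_toS q.val.2 _ hu _ i
  right_inv := by
    intro p
    apply Subtype.ext
    apply Prod.ext
    · exact toS_lamOf p.val.1 p.prop.1.1
    · exact toS_lamOf p.val.2 p.prop.1.2

end E2


open Nat in

lemma choose_id (m' n : ℕ) :
    ((m'+1+n).choose (m'+1) : ℚ) * ((m'+1+n).choose (m'+1) : ℚ)
      - ((m'+1+n).choose (m'+1+1) : ℚ) * ((m'+1+n).choose (m'+1-1) : ℚ)
    = 1/((m'+1 : ℚ)+n+1) * (((m'+1+n+1).choose (m'+1+1) : ℚ)) * (((m'+1+n+1).choose (m'+1)) : ℚ) := by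
  cases n with
  | zero =>
    have h0 : (m'+1+0) = m'+1 := rfl
    have h1 : (m'+1).choose (m'+1) = 1 := Nat.choose_self _
    have h2 : (m'+1).choose (m'+2) = 0 := Nat.choose_eq_zero_of_lt (by omega)
    have h3 : (m'+2).choose (m'+2) = 1 := Nat.choose_self _
    have h4 : (m'+2).choose (m'+1) = m'+2 := by
      have := Nat.choose_succ_self_right (m'+1)
      simpa using this
    simp only [h0, Nat.add_zero]
    rw [show m'+1+1 = m'+2 from rfl] at *
    rw [h1, h2, h3, h4]
    push_cast
    have : (m' : ℚ) + 2 ≠ 0 := by positivity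
    field_simp
    ring
  | succ n' =>
    set m := m' + 1 with hm
    set n := n' + 1 with hn
    have c1 : ((m+n).choose m : ℚ) = ((m + n)! : ℚ) / ((m ! : ℚ) * (n ! : ℚ)) := by
      rw [Nat.cast_choose ℚ (by omega : m ≤ m+n), show m + n - m = n from by omega]
    have c2 : ((m+n).choose (m+1) : ℚ) = ((m + n)! : ℚ) / (((m + 1)! : ℚ) * (n' ! : ℚ)) := by
      rw [Nat.cast_choose ℚ (by omega : m+1 ≤ m+n), show m + n - (m + 1) = n' from by omega]
    have c3 : ((m+n).choose (m-1) : ℚ) = ((m + n)! : ℚ) / ((m' ! : ℚ) * ((n + 1)! : ℚ)) := by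
      rw [Nat.cast_choose ℚ (by omega : m-1 ≤ m+n), show m + n - (m - 1) = n + 1 from by omega,
        show m - 1 = m' from by omega]
    have c4 : ((m+n+1).choose (m+1) : ℚ) = ((m + n + 1)! : ℚ) / (((m + 1)! : ℚ) * (n ! : ℚ)) := by
      rw [Nat.cast_choose ℚ (by omega : m+1 ≤ m+n+1), show m + n + 1 - (m + 1) = n from by omega]
    have c5 : ((m+n+1).choose m : ℚ) = ((m + n + 1)! : ℚ) / ((m ! : ℚ) * ((n + 1)! : ℚ)) := by
      rw [Nat.cast_choose ℚ (by omega : m ≤ m+n+1), show m + n + 1 - m = n + 1 from by omega]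
    rw [show m'+1-1 = m'-0 from rfl] at *
    rw [show (m'+1+1) = m+1 from rfl]
    rw [show m'+1+(n'+1) = m+n from rfl, show m'+1+(n'+1)+1 = m+n+1 from rfl]
    rw [show m' - 0 = m - 1 from by omega] at *
    rw [c1, c2, c3, c4, c5]
    have fm : (m ! : ℚ) = (m : ℚ) * (m' ! : ℚ) := by
      rw [hm, Nat.factorial_succ]; push_cast; ring
    have fm1 : ((m + 1)! : ℚ) = ((m : ℚ)+1) * (m ! : ℚ) := by
      rw [Nat.factorial_succ]; push_cast; ring
    have fn1 : ((n + 1)! : ℚ) = ((n : ℚ)+1) * (n ! : ℚ) := by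
      rw [Nat.factorial_succ]; push_cast; ring
    have fn : (n ! : ℚ) = (n : ℚ) * (n' ! : ℚ) := by
      rw [hn, Nat.factorial_succ]; push_cast; ring
    have fN1 : ((m + n + 1)! : ℚ) = ((m:ℚ)+(n:ℚ)+1) * ((m + n)! : ℚ) := by
      rw [show m+n+1 = (m+n)+1 from rfl, Nat.factorial_succ]; push_cast; ring
    have hm0 : (m' ! : ℚ) ≠ 0 := by exact_mod_cast Nat.factorial_ne_zero m'
    have hn0 : (n' ! : ℚ) ≠ 0 := by exact_mod_cast Nat.factorial_ne_zero n'
    have hmq : (m : ℚ) = (m' : ℚ) + 1 := by rw [hm]; push_cast; ring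
    have hnq : (n : ℚ) = (n' : ℚ) + 1 := by rw [hn]; push_cast; ring
    rw [fN1, fm1, fn1, fm, fn, hmq, hnq]
    have hNf : ((m + n)! : ℚ) ≠ 0 := by exact_mod_cast Nat.factorial_ne_zero (m+n)
    field_simp
    ring


end PP2

theorem plane_partitions_le_two_count (m n : ℕ) :
    (Nat.card {π : Fin m → Fin n → ℕ //
        (∀ i j, π i j ≤ 2) ∧
        (∀ i i' j j', i ≤ i' → j ≤ j' → π i' j' ≤ π i j)} : ℚ) =
      (1 / ((m : ℚ) + n + 1)) * ((m + n + 1).choose (m + 1) : ℚ) *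
        ((m + n + 1).choose m : ℚ) := by
  cases m with
  | zero =>
    haveI : Unique {π : Fin 0 → Fin n → ℕ //
        (∀ i j, π i j ≤ 2) ∧
        (∀ i i' j j', i ≤ i' → j ≤ j' → π i' j' ≤ π i j)} :=
      { default := ⟨fun i => i.elim0, fun i => i.elim0, fun i => i.elim0⟩,
        uniq := fun a => Subtype.ext (funext fun i => i.elim0) }
    rw [Nat.card_unique]
    rw [show (0 : ℕ) + n + 1 = n + 1 from by omega]
    rw [show (0 : ℕ) + 1 = 1 from rfl]
    rw [Nat.choose_one_right, Nat.choose_zero_right]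
    push_cast
    have h : (n : ℚ) + 1 ≠ 0 := by positivity
    field_simp
    ring
  | succ m' =>
    have hcongr := Nat.card_congr ((PP2.e1 (m := m'+1) (n := n)).trans PP2.e2)
    rw [hcongr, Nat.card_eq_fintype_card, Fintype.card_subtype]
    have key := PP2.good_card_add (N := m'+1+n) (m'+1) (Nat.succ_le_succ (Nat.zero_le m'))
    have keyQ : ((Finset.univ.filter fun p : Finset (Fin (m'+1+n)) × Finset (Fin (m'+1+n)) =>
        (p.1.card = m'+1 ∧ p.2.card = m'+1) ∧ ∀ k < m'+1+n, PP2.cnt k p.2 ≤ PP2.cnt k p.1).card : ℚ)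
        = ((m'+1+n).choose (m'+1) : ℚ) * ((m'+1+n).choose (m'+1) : ℚ)
          - ((m'+1+n).choose (m'+1+1) : ℚ) * ((m'+1+n).choose m' : ℚ) := by
      have hc := congrArg (fun x : ℕ => (x : ℚ)) key
      push_cast at hc
      linarith
    have hid := PP2.choose_id m' n
    push_cast at keyQ hid ⊢
    rw [keyQ]
    linarith
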